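/- Let A be an associative unital k-algebra and let A_t be a formal deformation of A, given by a sequence of k-bilinear maps αᵢ : A × A → A (α₀ the multiplication of A) making A[[t]] an associative unital k[[t]]-algebra with unit 1 via the product whose tᵏ-coefficient on (Σ aₙtⁿ)·(Σ bₚtᵖ) is Σ_{m+n+p=k} α_m(aₙ, bₚ). If e is a central idempotent of A, then there exists a unique idempotent e_t of A_t whose constant term is e. -/

import Mathlib

open PowerSeries Finset

section Aux

variable {A : Type*} [Ring A] (α : ℕ → A → A → A)

/-- The deformed multiplication on power series. -/
noncomputable def Mmul (p q : PowerSeries A) : PowerSeries A :=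
  PowerSeries.mk fun n : ℕ =>
    ∑ x ∈ Finset.HasAntidiagonal.antidiagonal n, ∑ y ∈ Finset.HasAntidiagonal.antidiagonal x.2,
      α x.1 (PowerSeries.coeff y.1 p) (PowerSeries.coeff y.2 q)

lemma coeff_Mmul (p q : PowerSeries A) (n : ℕ) :
    PowerSeries.coeff n (Mmul α p q) =
      ∑ x ∈ Finset.HasAntidiagonal.antidiagonal n, ∑ y ∈ Finset.HasAntidiagonal.antidiagonal x.2,
        α x.1 (PowerSeries.coeff y.1 p) (PowerSeries.coeff y.2 q) := by
  simp [Mmul]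

variable (haddl : ∀ (i : ℕ) (a a' b : A), α i (a + a') b = α i a b + α i a' b)
variable (haddr : ∀ (i : ℕ) (a b b' : A), α i a (b + b') = α i a b + α i a b')

include haddl in
lemma alpha_zero_left (i : ℕ) (b : A) : α i 0 b = 0 := by
  have h := haddl i 0 0 b
  rw [add_zero] at h
  exact (left_eq_add.mp h)

include haddr in
lemma alpha_zero_right (i : ℕ) (a : A) : α i a 0 = 0 := by
  have h := haddr i a 0 0
  rw [add_zero] at h
  exact (left_eq_add.mp h)

include haddl in
lemma Mmul_add_left (p p' q : PowerSeries A) :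
    Mmul α (p + p') q = Mmul α p q + Mmul α p' q := by
  ext n
  simp only [coeff_Mmul, map_add, haddl, Finset.sum_add_distrib]

include haddr in
lemma Mmul_add_right (p q q' : PowerSeries A) :
    Mmul α p (q + q') = Mmul α p q + Mmul α p q' := by
  ext n
  simp only [coeff_Mmul, map_add, haddr, Finset.sum_add_distrib]

variable (hα0 : ∀ a b : A, α 0 a b = a * b)

include haddr hα0 in
/-- If `q` has no coefficients below degree `n+1`, the `(n+1)`-st coefficient of the deformed
product is `p₀ * q_{n+1}`. -/
lemma coeff_Mmul_right_high {n : ℕ} (p q : PowerSeries A)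
    (hq : ∀ k, k ≤ n → PowerSeries.coeff k q = 0) :
    PowerSeries.coeff (n+1) (Mmul α p q) =
      PowerSeries.coeff 0 p * PowerSeries.coeff (n+1) q := by
  rw [coeff_Mmul]
  rw [Finset.sum_eq_single ((0 : ℕ), n+1)]
  · rw [Finset.sum_eq_single ((0 : ℕ), n+1)]
    · exact hα0 _ _
    · intro y hy hne
      rw [Finset.HasAntidiagonal.mem_antidiagonal] at hy
      have hy2 : y.2 ≤ n := by
        by_contra hgt
        push_neg at hgt
        have h2 : y.2 = n + 1 := le_antisymm (by omega) hgt
        have h1 : y.1 = 0 := by omega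
        exact hne (Prod.ext h1 h2)
      rw [hq y.2 hy2, alpha_zero_right α haddr]
    · intro h
      exact (h (by simp)).elim
  · intro x hx hne
    rw [Finset.HasAntidiagonal.mem_antidiagonal] at hx
    apply Finset.sum_eq_zero
    intro y hy
    rw [Finset.HasAntidiagonal.mem_antidiagonal] at hy
    have hx1 : x.1 ≠ 0 := by
      intro h0
      exact hne (Prod.ext h0 (by omega))
    have hy2 : y.2 ≤ n := by omega
    rw [hq y.2 hy2, alpha_zero_right α haddr]
  · intro h
    exact (h (by simp)).elim

include haddl hα0 in
lemma coeff_Mmul_left_high {n : ℕ} (p q : PowerSeries A)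
    (hp : ∀ k, k ≤ n → PowerSeries.coeff k p = 0) :
    PowerSeries.coeff (n+1) (Mmul α p q) =
      PowerSeries.coeff (n+1) p * PowerSeries.coeff 0 q := by
  rw [coeff_Mmul]
  rw [Finset.sum_eq_single ((0 : ℕ), n+1)]
  · rw [Finset.sum_eq_single ((n+1 : ℕ), 0)]
    · exact hα0 _ _
    · intro y hy hne
      rw [Finset.HasAntidiagonal.mem_antidiagonal] at hy
      have hy1 : y.1 ≤ n := by
        by_contra hgt
        push_neg at hgt
        have h1 : y.1 = n + 1 := le_antisymm (by omega) hgt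
        exact hne (Prod.ext h1 (by omega))
      rw [hp y.1 hy1, alpha_zero_left α haddl]
    · intro h
      exact (h (by simp)).elim
  · intro x hx hne
    rw [Finset.HasAntidiagonal.mem_antidiagonal] at hx
    apply Finset.sum_eq_zero
    intro y hy
    rw [Finset.HasAntidiagonal.mem_antidiagonal] at hy
    have hx1 : x.1 ≠ 0 := by
      intro h0
      exact hne (Prod.ext h0 (by omega))
    have hy1 : y.1 ≤ n := by omega
    rw [hp y.1 hy1, alpha_zero_left α haddl]
  · intro h
    exact (h (by simp)).elim

/-- Truncation of a power series to degrees `≤ n`. -/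
noncomputable def truncF (n : ℕ) (p : PowerSeries A) : PowerSeries A :=
  PowerSeries.mk fun k => if k ≤ n then PowerSeries.coeff k p else 0

lemma coeff_truncF (n k : ℕ) (p : PowerSeries A) :
    PowerSeries.coeff k (truncF n p) = if k ≤ n then PowerSeries.coeff k p else 0 := by
  simp [truncF]

include haddl haddr hα0 in
/-- Decomposition of the `(n+1)`-st coefficient of the deformed square. -/
lemma coeff_Mmul_self (n : ℕ) (p : PowerSeries A) :
    PowerSeries.coeff (n+1) (Mmul α p p) =
      PowerSeries.coeff (n+1) (Mmul α (truncF n p) (truncF n p))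
      + PowerSeries.coeff 0 p * PowerSeries.coeff (n+1) p
      + PowerSeries.coeff (n+1) p * PowerSeries.coeff 0 p := by
  set T := truncF n p with hT
  set Δ := p - T with hΔ
  have hΔlow : ∀ k, k ≤ n → PowerSeries.coeff k Δ = 0 := by
    intro kk hk
    simp [hΔ, hT, coeff_truncF, map_sub, if_pos hk]
  have hΔtop : PowerSeries.coeff (n+1) Δ = PowerSeries.coeff (n+1) p := by
    simp [hΔ, hT, map_sub, coeff_truncF]
  have hT0 : PowerSeries.coeff 0 T = PowerSeries.coeff 0 p := by
    simp [hT, coeff_truncF]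
  have hdec : p = T + Δ := by rw [hΔ]; abel
  conv_lhs => rw [hdec]
  rw [Mmul_add_left α haddl, Mmul_add_right α haddr, Mmul_add_right α haddr, map_add, map_add,
    map_add]
  rw [coeff_Mmul_right_high α haddr hα0 T Δ hΔlow,
    coeff_Mmul_left_high α haddl hα0 Δ T hΔlow,
    coeff_Mmul_right_high α haddr hα0 Δ Δ hΔlow,
    hΔtop, hT0, hΔlow 0 (Nat.zero_le n), zero_mul, add_zero]

/-- Successive approximations to the lifted idempotent. -/
noncomputable def Papprox (e : A) : ℕ → PowerSeries A
  | 0 => PowerSeries.C e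
  | n+1 => Papprox e n + (PowerSeries.monomial (n+1))
      ((1 - 2*e) * PowerSeries.coeff (n+1) (Mmul α (Papprox e n) (Papprox e n)))

lemma Papprox_coeff_high (e : A) : ∀ N k, N < k → PowerSeries.coeff k (Papprox α e N) = 0 := by
  intro N
  induction N with
  | zero =>
      intro kk hk
      rw [Papprox, PowerSeries.coeff_C, if_neg (by omega)]
  | succ n ih =>
      intro kk hk
      rw [Papprox, map_add, ih kk (by omega), PowerSeries.coeff_monomial, if_neg (by omega),
        zero_add]

lemma Papprox_stable (e : A) : ∀ N k, k ≤ N →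
    PowerSeries.coeff k (Papprox α e N) = PowerSeries.coeff k (Papprox α e k) := by
  intro N
  induction N with
  | zero =>
      intro kk hk
      have : kk = 0 := by omega
      subst this
      rfl
  | succ n ih =>
      intro kk hk
      rcases Nat.lt_or_ge kk (n+1) with h | h
      · rw [Papprox, map_add, PowerSeries.coeff_monomial, if_neg (by omega), add_zero]
        exact ih kk (by omega)
      · have : kk = n + 1 := by omega
        subst this
        rfl

/-- Key ring computation: with `e` idempotent commuting with `R`, `c := (1-2e)R` satisfies
`R + ec + ce = c`. -/
lemma key_alg {e R : A} (he : e*e = e) (hc : e*R = R*e) :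
    R + e*((1-2*e)*R) + ((1-2*e)*R)*e = (1-2*e)*R := by
  have h2 : e*(e*R) = e*R := by rw [← mul_assoc, he]
  have h3 : (e*R)*e = e*R := by rw [mul_assoc, ← hc, ← mul_assoc, he]
  have e1 : (1-2*e)*R = R - (e*R + e*R) := by noncomm_ring
  rw [e1, mul_sub, mul_add, h2, sub_mul, add_mul, h3, ← hc]
  abel

end Aux

/-- Let `A` be an associative unital `k`-algebra and `A_t` a formal
deformation of `A`: the `k[[t]]`-module `A[[t]]` (encoded as a ring `D` identified with
`PowerSeries A` via the bijection `ι`) with multiplication determined by `k`-bilinear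
maps `αᵢ : A × A → A` (with `α₀` the multiplication of `A`) via the formula that the
`tᵏ`-coefficient of the product of `Σ aₙtⁿ` and `Σ bₚtᵖ` is `Σ_{m+n+p=k} α_m(aₙ, bₚ)`;
the unit is the constant power series `1`.  If `e` is a central idempotent of `A`, then
there exists a unique idempotent of `A_t` with constant term `e`. -/
theorem central_idempotent_lifts_uniquely_in_formal_deformation
    {k A D : Type*} [CommRing k] [Ring A] [Algebra k A] [Ring D]
    (α : ℕ → A → A → A)
    (hα0 : ∀ a b : A, α 0 a b = a * b)
    (haddl : ∀ (i : ℕ) (a a' b : A), α i (a + a') b = α i a b + α i a' b)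
    (haddr : ∀ (i : ℕ) (a b b' : A), α i a (b + b') = α i a b + α i a b')
    (hsmull : ∀ (i : ℕ) (c : k) (a b : A), α i (c • a) b = c • α i a b)
    (hsmulr : ∀ (i : ℕ) (c : k) (a b : A), α i a (c • b) = c • α i a b)
    (ι : PowerSeries A ≃ D)
    (hadd : ∀ p q : PowerSeries A, ι (p + q) = ι p + ι q)
    (hmul : ∀ p q : PowerSeries A,
      ι p * ι q = ι (PowerSeries.mk fun n : ℕ =>
        ∑ x ∈ Finset.HasAntidiagonal.antidiagonal n, ∑ y ∈ Finset.HasAntidiagonal.antidiagonal x.2,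
          α x.1 (PowerSeries.coeff y.1 p) (PowerSeries.coeff y.2 q)))
    (hone : ι 1 = 1)
    (e : A) (he : IsIdempotentElem e) (hcentral : ∀ a : A, e * a = a * e) :
    ∃! E : PowerSeries A, IsIdempotentElem (ι E) ∧ PowerSeries.constantCoeff E = e := by
  classical
  have he' : e * e = e := he
  have hMbridge : ∀ p q : PowerSeries A, ι p * ι q = ι (Mmul α p q) := fun p q => hmul p q
  -- recurrence satisfied by any fixed point of the deformed squaring with constant term `e`
  have hrec : ∀ p : PowerSeries A, Mmul α p p = p → PowerSeries.coeff 0 p = e →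
      ∀ n : ℕ, PowerSeries.coeff (n+1) p =
        PowerSeries.coeff (n+1) (Mmul α (truncF n p) (truncF n p))
        + e * PowerSeries.coeff (n+1) p + e * PowerSeries.coeff (n+1) p := by
    intro p hfp hp0 n
    have h := coeff_Mmul_self α haddl haddr hα0 n p
    rw [hfp, hp0, ← hcentral] at h
    exact h
  set E : PowerSeries A := PowerSeries.mk (fun n => PowerSeries.coeff n (Papprox α e n))
    with hE
  have hEc : ∀ n, PowerSeries.coeff n E = PowerSeries.coeff n (Papprox α e n) := by
    intro n
    rw [hE, PowerSeries.coeff_mk]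
  have hElow : ∀ N kk, kk ≤ N →
      PowerSeries.coeff kk E = PowerSeries.coeff kk (Papprox α e N) := by
    intro N kk h
    rw [hEc, ← Papprox_stable α e N kk h]
  have hTE : ∀ n, truncF n E = Papprox α e n := by
    intro n
    ext kk
    rw [coeff_truncF]
    by_cases h : kk ≤ n
    · rw [if_pos h, hElow n kk h]
    · rw [if_neg h, Papprox_coeff_high α e n kk (by omega)]
  have hE0 : PowerSeries.coeff 0 E = e := by
    rw [hEc]
    simp [Papprox]
  have hEfix : Mmul α E E = E := by
    ext kk
    cases kk with
    | zero =>
        rw [coeff_Mmul]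
        simp only [Finset.Nat.antidiagonal_zero, Finset.sum_singleton]
        rw [hα0, hE0, he']
    | succ n =>
        rw [coeff_Mmul_self α haddl haddr hα0 n E, hTE n, hE0]
        have hco : PowerSeries.coeff (n+1) E =
            (1-2*e) * PowerSeries.coeff (n+1)
              (Mmul α (Papprox α e n) (Papprox α e n)) := by
          rw [hElow (n+1) (n+1) le_rfl, Papprox, map_add,
            Papprox_coeff_high α e n (n+1) (by omega), PowerSeries.coeff_monomial,
            if_pos rfl, zero_add]
        rw [hco]
        exact key_alg he' (hcentral _)
  have hEidem : IsIdempotentElem (ι E) := by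
    show ι E * ι E = ι E
    rw [hMbridge, hEfix]
  refine ⟨E, ⟨hEidem, ?_⟩, ?_⟩
  · rw [← PowerSeries.coeff_zero_eq_constantCoeff_apply]
    exact hE0
  · rintro q ⟨hqidem, hq0⟩
    have hqfix : Mmul α q q = q := by
      have h := hqidem
      rw [IsIdempotentElem, hMbridge] at h
      exact ι.injective h
    have hq0' : PowerSeries.coeff 0 q = e := by
      rw [PowerSeries.coeff_zero_eq_constantCoeff_apply]
      exact hq0
    have hcoef : ∀ n, PowerSeries.coeff n q = PowerSeries.coeff n E := by
      intro n
      induction n using Nat.strong_induction_on with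
      | _ n ih =>
        match n with
        | 0 => rw [hq0', hE0]
        | (m+1) =>
          have hTq : truncF m q = truncF m E := by
            ext kk
            rw [coeff_truncF, coeff_truncF]
            by_cases h : kk ≤ m
            · rw [if_pos h, if_pos h, ih kk (by omega)]
            · rw [if_neg h, if_neg h]
          have h1 := hrec q hqfix hq0' m
          have h2 := hrec E hEfix hE0 m
          rw [hTq] at h1
          have hd : PowerSeries.coeff (m+1) q - PowerSeries.coeff (m+1) E =
              e*(PowerSeries.coeff (m+1) q - PowerSeries.coeff (m+1) E)
              + e*(PowerSeries.coeff (m+1) q - PowerSeries.coeff (m+1) E) := by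
            conv_lhs => rw [h1, h2]
            noncomm_ring
          set d := PowerSeries.coeff (m+1) q - PowerSeries.coeff (m+1) E with hdd
          have hed : e*d = 0 := by
            have h5 : e*d = e*d + e*d := by
              calc e*d = e*(e*d + e*d) := by rw [← hd]
              _ = e*(e*d) + e*(e*d) := mul_add e _ _
              _ = e*d + e*d := by rw [← mul_assoc, he']
            exact (left_eq_add.mp h5)
          have hd0 : d = 0 := by rw [hd, hed, add_zero]
          exact sub_eq_zero.mp hd0
    exact PowerSeries.ext hcoef
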